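/- In the Grassmann algebra G^{(2m)} of a 2m-dimensional vector space over a field of characteristic 0, any product of elements containing at least m+1 factors that are commutators is zero: if c_1,…,c_{m+1} are commutators [a_i,b_i] and w_0,…,w_{m+1} are arbitrary elements, then w_0 c_1 w_1 c_2 ⋯ c_{m+1} w_{m+1} = 0. -/

import Mathlib

set_option maxHeartbeats 1000000


/-- Commutator `[a,b] = ab - ba`. -/
def br {R : Type*} [Ring R] (a b : R) : R := a * b - b * a

section Aux

open ExteriorAlgebra

variable {K : Type*} [Field K] {M : Type*} [AddCommGroup M] [Module K M]

/-- The span of products of at least `k` generators. -/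
noncomputable def Jdeg (K : Type*) [Field K] (M : Type*) [AddCommGroup M] [Module K M]
    (k : ℕ) : Submodule K (ExteriorAlgebra K M) :=
  ⨆ i, LinearMap.range (ι K (M := M)) ^ (k + i)

lemma mem_Jdeg {k : ℕ} (i : ℕ) {x : ExteriorAlgebra K M}
    (h : x ∈ LinearMap.range (ι K (M := M)) ^ (k + i)) : x ∈ Jdeg K M k :=
  Submodule.mem_iSup_of_mem i h

lemma Jdeg_antitone {p q : ℕ} (h : p ≤ q) : Jdeg K M q ≤ Jdeg K M p := by
  refine iSup_le fun i => ?_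
  have hq : q + i = p + (q - p + i) := by omega
  intro x hx
  exact mem_Jdeg (q - p + i) (by rw [← hq]; exact hx)

lemma Jdeg_mul {p q : ℕ} {x y : ExteriorAlgebra K M}
    (hx : x ∈ Jdeg K M p) (hy : y ∈ Jdeg K M q) : x * y ∈ Jdeg K M (p + q) := by
  have hle : Jdeg K M p * Jdeg K M q ≤ Jdeg K M (p + q) := by
    simp only [Jdeg, Submodule.iSup_mul, Submodule.mul_iSup]
    refine iSup_le fun i => iSup_le fun j => ?_
    rw [← pow_add]
    intro x hx
    exact mem_Jdeg (j + i) (by rw [show p + q + (j + i) = p + j + (q + i) by ring]; exact hx)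
  exact hle (Submodule.mul_mem_mul hx hy)

lemma Jdeg_zero_top (x : ExteriorAlgebra K M) : x ∈ Jdeg K M 0 := by
  induction x using ExteriorAlgebra.induction with
  | algebraMap r =>
    refine mem_Jdeg 0 ?_
    rw [pow_zero, Submodule.one_eq_range]
    exact ⟨r, rfl⟩
  | ι x =>
    refine mem_Jdeg 1 ?_
    rw [zero_add, pow_one]
    exact LinearMap.mem_range_self _ _
  | mul a b ha hb => exact Jdeg_mul (p := 0) (q := 0) ha hb
  | add a b ha hb => exact add_mem ha hb

lemma Jdeg_decomp (x : ExteriorAlgebra K M) :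
    ∃ (s : K) (y : ExteriorAlgebra K M), y ∈ Jdeg K M 1 ∧
      x = algebraMap K (ExteriorAlgebra K M) s + y := by
  induction x using ExteriorAlgebra.induction with
  | algebraMap r => exact ⟨r, 0, zero_mem _, by simp⟩
  | ι x =>
    refine ⟨0, ι K x, ?_, by simp⟩
    refine mem_Jdeg 0 ?_
    rw [pow_one]
    exact LinearMap.mem_range_self _ _
  | mul a b ha hb =>
    obtain ⟨s1, y1, hy1, rfl⟩ := ha
    obtain ⟨s2, y2, hy2, rfl⟩ := hb
    refine ⟨s1 * s2, s1 • y2 + s2 • y1 + y1 * y2,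
      add_mem (add_mem (Submodule.smul_mem _ _ hy2) (Submodule.smul_mem _ _ hy1))
        (Jdeg_antitone (p := 1) (q := 2) (by norm_num) (Jdeg_mul (p := 1) (q := 1) hy1 hy2)), ?_⟩
    simp only [Algebra.smul_def, map_mul]
    rw [add_mul, mul_add, mul_add, Algebra.commutes s2 y1]
    abel
  | add a b ha hb =>
    obtain ⟨s1, y1, hy1, rfl⟩ := ha
    obtain ⟨s2, y2, hy2, rfl⟩ := hb
    exact ⟨s1 + s2, y1 + y2, add_mem hy1 hy2, by rw [map_add]; abel⟩

lemma br_mem_Jdeg_two (a b : ExteriorAlgebra K M) : br a b ∈ Jdeg K M 2 := by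
  obtain ⟨s1, y1, hy1, rfl⟩ := Jdeg_decomp a
  obtain ⟨s2, y2, hy2, rfl⟩ := Jdeg_decomp b
  have key : br (algebraMap K (ExteriorAlgebra K M) s1 + y1)
      (algebraMap K (ExteriorAlgebra K M) s2 + y2) = y1 * y2 - y2 * y1 := by
    unfold br
    rw [add_mul, mul_add, mul_add, add_mul, mul_add, mul_add,
      Algebra.commutes s1 y2, Algebra.commutes s2 y1,
      Algebra.commutes s1 (algebraMap K (ExteriorAlgebra K M) s2)]
    abel
  rw [key]
  exact sub_mem (Jdeg_mul (p := 1) (q := 1) hy1 hy2) (Jdeg_mul (p := 1) (q := 1) hy2 hy1)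

lemma prod_mem_Jdeg (l : List (ExteriorAlgebra K M)) (h : ∀ x ∈ l, x ∈ Jdeg K M 2) :
    l.prod ∈ Jdeg K M (2 * l.length) := by
  induction l with
  | nil =>
    simp only [List.prod_nil, List.length_nil, mul_zero]
    exact Jdeg_zero_top 1
  | cons x l ih =>
    rw [List.prod_cons, List.length_cons, show 2 * (l.length + 1) = 2 + 2 * l.length by ring]
    exact Jdeg_mul (p := 2) (q := 2 * l.length) (h x List.mem_cons_self)
      (ih fun y hy => h y (List.mem_cons_of_mem x hy))

end Aux

lemma Jdeg_high_eq_bot {K : Type*} [Field K] (m : ℕ) :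
    Jdeg K (Fin (2 * m) → K) (2 * m + 1) = ⊥ := by
  have hbot : (LinearMap.range (ExteriorAlgebra.ι K (M := Fin (2 * m) → K)) ^ (2 * m + 1)
      : Submodule K (ExteriorAlgebra K (Fin (2 * m) → K))) = ⊥ := by
    have hspan := ExteriorAlgebra.ιMulti_span_fixedDegree (R := K) (M := Fin (2 * m) → K)
      (2 * m + 1)
    refine Eq.trans (Eq.symm hspan) ?_
    rw [Submodule.span_eq_bot]
    rintro x ⟨v, rfl⟩
    refine AlternatingMap.map_linearDependent _ v fun hli => ?_
    have hcard := hli.fintype_card_le_finrank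
    rw [Module.finrank_fin_fun, Fintype.card_fin] at hcard
    omega
  refine le_antisymm (iSup_le fun i => ?_) bot_le
  rw [pow_add, hbot, Submodule.bot_mul]

theorem stmt7 {K : Type*} [Field K] [CharZero K] (m : ℕ)
    (a b w : ℕ → ExteriorAlgebra K (Fin (2 * m) → K)) :
    w 0 * (List.ofFn (fun i : Fin (m + 1) => br (a i) (b i) * w (i + 1))).prod = 0 := by
  have hmem : (List.ofFn (fun i : Fin (m + 1) => br (a i) (b i) * w (i + 1))).prod
      ∈ Jdeg K (Fin (2 * m) → K) (2 * (m + 1)) := by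
    have h := prod_mem_Jdeg (List.ofFn fun i : Fin (m + 1) => br (a i) (b i) * w (i + 1))
      (fun x hx => by
        rw [List.mem_ofFn] at hx
        obtain ⟨i, rfl⟩ := hx
        have h2 := Jdeg_mul (p := 2) (q := 0) (br_mem_Jdeg_two (a i) (b i)) (Jdeg_zero_top (w (i + 1)))
        simpa using h2)
    simpa using h
  have h2 : w 0 * (List.ofFn (fun i : Fin (m + 1) => br (a i) (b i) * w (i + 1))).prod
      ∈ Jdeg K (Fin (2 * m) → K) (2 * m + 1) := by
    have h3 := Jdeg_mul (p := 0) (q := 2 * (m + 1)) (Jdeg_zero_top (w 0)) hmem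
    simp only [zero_add] at h3
    exact Jdeg_antitone (by omega) h3
  rw [Jdeg_high_eq_bot] at h2
  simpa using h2
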